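/- There exists a constant C' ≥ 1, depending only on κ, such that the following holds (long-time regime, Lemma 2.4 (1)(i)). Let d ≥ 1, κ > 1, U > 0, t > 0, x_min ∈ [0, (Ut)^{κ/(κ-1)}], and x ∈ ℝ^d with ‖x‖ ≤ (Ut)^{κ/(κ-1)}. Then every differentiable y : [0,t] → ℝ^d with y(0) = x and ‖y'(s)‖ ≤ U·(x_min + ‖y(s)‖)^{1/κ} for all s ∈ [0,t] satisfies ‖y(s)‖ ≤ C'·(Ut)^{κ/(κ-1)} for all s ∈ [0,t]. -/

import Mathlib

/-- Lemma 2.4 (1)(i), long-time regime: there is a constant `C' ≥ 1` depending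
only on `κ` such that any curve started at `x` with `‖x‖ ≤ (Ut)^{κ/(κ-1)}`, whose
speed is bounded by `U (x_min + ‖·‖)^{1/κ}` with small cut-off
`x_min ∈ [0, (Ut)^{κ/(κ-1)}]`, stays in the ball `B(0, C' (Ut)^{κ/(κ-1)})`. -/
theorem long_time_regime_bound (κ : ℝ) (hκ : 1 < κ) :
    ∃ C' : ℝ, 1 ≤ C' ∧
      ∀ (d : ℕ), 1 ≤ d →
        ∀ U t xmin : ℝ, 0 < U → 0 < t →
          xmin ∈ Set.Icc (0 : ℝ) ((U * t) ^ (κ / (κ - 1))) →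
          ∀ x : EuclideanSpace ℝ (Fin d), ‖x‖ ≤ (U * t) ^ (κ / (κ - 1)) →
            ∀ y y' : ℝ → EuclideanSpace ℝ (Fin d), y 0 = x →
              (∀ s ∈ Set.Icc (0 : ℝ) t, HasDerivAt y (y' s) s) →
              (∀ s ∈ Set.Icc (0 : ℝ) t, ‖y' s‖ ≤ U * (xmin + ‖y s‖) ^ (1 / κ)) →
              ∀ s ∈ Set.Icc (0 : ℝ) t, ‖y s‖ ≤ C' * (U * t) ^ (κ / (κ - 1)) := by
  have hκ0 : (0:ℝ) < κ := by linarith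
  have hκ1 : (0:ℝ) < κ - 1 := by linarith
  have hαpos : 0 < κ / (κ - 1) := div_pos hκ0 hκ1
  refine ⟨(3:ℝ) ^ (κ/(κ-1)), Real.one_le_rpow (by norm_num) hαpos.le, ?_⟩
  intro d hd U t xmin hU ht hxmin x hx y y' hy0 hyd hyb s hs
  set α := κ/(κ-1) with hαdef
  set R := (U*t) ^ α with hRdef
  have hUt : 0 < U*t := mul_pos hU ht
  have hRpos : 0 < R := Real.rpow_pos_of_pos hUt α
  -- maximum of ‖y‖ on [0,t]
  have hcont : ContinuousOn (fun u => ‖y u‖) (Set.Icc 0 t) := fun u hu =>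
    ((hyd u hu).continuousAt.continuousWithinAt).norm
  obtain ⟨s₀, hs₀, hmax⟩ := (isCompact_Icc).exists_isMaxOn
    ⟨0, Set.left_mem_Icc.2 ht.le⟩ hcont
  set M := ‖y s₀‖ with hMdef
  have hMnn : 0 ≤ M := norm_nonneg _
  have hMb : ∀ u ∈ Set.Icc (0:ℝ) t, ‖y u‖ ≤ M := hmax
  have hxminnn : 0 ≤ xmin := hxmin.1
  -- uniform derivative bound
  have hderiv : ∀ u ∈ Set.Icc (0:ℝ) t, ‖y' u‖ ≤ U * (xmin + M) ^ (1/κ) := by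
    intro u hu
    refine (hyb u hu).trans ?_
    exact mul_le_mul_of_nonneg_left
      (Real.rpow_le_rpow (by positivity) (by linarith [hMb u hu]) (by positivity)) hU.le
  -- mean value inequality
  have hmvt := (convex_Icc (0:ℝ) t).norm_image_sub_le_of_norm_hasDerivWithin_le
    (fun u hu => (hyd u hu).hasDerivWithinAt) hderiv (Set.left_mem_Icc.2 ht.le) hs₀
  have hMle : M ≤ R + U * (xmin + M) ^ (1/κ) * t := by
    have h1 : M - ‖y 0‖ ≤ ‖y s₀ - y 0‖ := norm_sub_norm_le _ _
    have h2 : ‖s₀ - 0‖ ≤ t := by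
      rw [sub_zero, Real.norm_eq_abs, abs_of_nonneg hs₀.1]; exact hs₀.2
    have h3 : ‖y 0‖ ≤ R := by rw [hy0]; exact hx
    have h4 : ‖y s₀ - y 0‖ ≤ U * (xmin + M) ^ (1/κ) * t := by
      refine hmvt.trans ?_
      have hC : 0 ≤ U * (xmin + M) ^ (1/κ) := by positivity
      exact mul_le_mul_of_nonneg_left h2 hC
    linarith
  -- main algebraic step:  M ≤ 3^α * R
  have key : M ≤ (3:ℝ)^α * R := by
    by_cases hMR : M ≤ R
    · have h1 : R ≤ (3:ℝ)^α * R := by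
        nlinarith [Real.one_le_rpow (show (1:ℝ) ≤ 3 by norm_num) hαpos.le, hRpos]
      linarith
    push_neg at hMR
    have hMpos : 0 < M := hRpos.trans hMR
    -- (xmin + M)^{1/κ} ≤ 2 * M^{1/κ}
    have hbase : xmin + M ≤ 2 * M := by
      have := hxmin.2
      have : xmin ≤ R := this
      linarith
    have h2 : (xmin + M) ^ (1/κ) ≤ 2 * M ^ (1/κ) := by
      calc (xmin + M) ^ (1/κ) ≤ (2*M) ^ (1/κ) :=
            Real.rpow_le_rpow (by positivity) hbase (by positivity)
        _ = 2 ^ (1/κ) * M ^ (1/κ) := Real.mul_rpow (by norm_num) hMnn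
        _ ≤ 2 * M ^ (1/κ) := by
            have h21 : (2:ℝ) ^ (1/κ) ≤ 2 ^ (1:ℝ) :=
              Real.rpow_le_rpow_of_exponent_le (by norm_num)
                (by rw [div_le_one hκ0]; linarith)
            rw [Real.rpow_one] at h21
            have : 0 ≤ M ^ (1/κ) := by positivity
            nlinarith
    -- R = (U*t) * R^{1/κ}
    have hReq : R = (U*t) * R ^ (1/κ) := by
      have e1 : α * (1/κ) = 1/(κ-1) := by rw [hαdef]; field_simp
      have e2 : α = 1 + 1/(κ-1) := by rw [hαdef]; field_simp; ring
      rw [hRdef, ← Real.rpow_mul hUt.le, e1]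
      nth_rewrite 1 [e2]
      rw [Real.rpow_add hUt, Real.rpow_one]
    have hRM : R ^ (1/κ) ≤ M ^ (1/κ) :=
      Real.rpow_le_rpow hRpos.le hMR.le (by positivity)
    -- M ≤ 3 * (U*t) * M^{1/κ}
    have h3 : M ≤ 3 * (U*t) * M ^ (1/κ) := by
      have hRle : R ≤ (U*t) * M ^ (1/κ) := by
        rw [hReq]; exact mul_le_mul_of_nonneg_left hRM hUt.le
      have := hMle
      nlinarith [hUt, Real.rpow_nonneg hMnn (1/κ)]
    -- divide by M^{1/κ} : M^{1 - 1/κ} ≤ 3*(U*t)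
    have h4 : M ^ (1 - 1/κ) ≤ 3 * (U*t) := by
      have hMκpos : 0 < M ^ (1/κ) := Real.rpow_pos_of_pos hMpos _
      rw [Real.rpow_sub hMpos, Real.rpow_one, div_le_iff₀ hMκpos]
      linarith [h3]
    -- raise to power α
    have h5 : (M ^ (1 - 1/κ)) ^ α ≤ (3 * (U*t)) ^ α :=
      Real.rpow_le_rpow (by positivity) h4 hαpos.le
    have h6 : (M ^ (1 - 1/κ)) ^ α = M := by
      rw [← Real.rpow_mul hMnn]
      have : (1 - 1/κ) * α = 1 := by
        rw [hαdef]; field_simp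
      rw [this, Real.rpow_one]
    have h7 : (3 * (U*t)) ^ α = 3^α * R := by
      rw [hRdef, Real.mul_rpow (by norm_num) hUt.le]
    rw [h6, h7] at h5
    exact h5
  calc ‖y s‖ ≤ M := hMb s hs
    _ ≤ (3:ℝ)^α * R := key
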